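/- For every integer n ≥ 1, the number of UD-equivalence classes of ballot paths of length n equals f_{n+1}, the (n+1)-st Fibonacci number. -/

import Mathlib

/-- A path is a list of steps: `true` is an up-step U, `false` is a down-step D. -/
abbrev Step := Bool

/-- The height of the `j`-th lattice point of the path `p`. -/
def pathHeight (p : List Bool) (j : ℕ) : ℤ :=
  ((p.take j).count true : ℤ) - ((p.take j).count false : ℤ)

/-- A ballot path: every prefix has at least as many U's as D's. -/
def IsBallot (p : List Bool) : Prop :=
  ∀ k : ℕ, (p.take k).count false ≤ (p.take k).count true

/-- A Dyck path: a ballot path with equally many U's and D's. -/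
def IsDyck (p : List Bool) : Prop :=
  IsBallot p ∧ p.count true = p.count false

/-- The string `τ` occurs at (0-indexed) position `i` of the path `p`. -/
def OccursAt (τ p : List Bool) (i : ℕ) : Prop :=
  (p.drop i).take τ.length = τ

/-- Two paths are `τ`-equivalent: same length and occurrences of `τ` at the same positions. -/
def PathEquiv (τ p q : List Bool) : Prop :=
  p.length = q.length ∧ ∀ i : ℕ, OccursAt τ p i ↔ OccursAt τ q i

/-- The setoid of `τ`-equivalence on ballot paths of length `n`. -/
def ballotSetoid (τ : List Bool) (n : ℕ) :
    Setoid {p : List Bool // IsBallot p ∧ p.length = n} where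
  r p q := PathEquiv τ p.1 q.1
  iseqv := ⟨fun _ => ⟨rfl, fun _ => Iff.rfl⟩,
            fun h => ⟨h.1.symm, fun i => (h.2 i).symm⟩,
            fun h1 h2 => ⟨h1.1.trans h2.1, fun i => (h1.2 i).trans (h2.2 i)⟩⟩

/-- The number of `τ`-equivalence classes of ballot paths of length `n`. -/
noncomputable def numBallotClasses (τ : List Bool) (n : ℕ) : ℕ :=
  Nat.card (Quotient (ballotSetoid τ n))

/-- The setoid of `τ`-equivalence on Dyck paths of semilength `n`. -/
def dyckSetoid (τ : List Bool) (n : ℕ) :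
    Setoid {p : List Bool // IsDyck p ∧ p.length = 2 * n} where
  r p q := PathEquiv τ p.1 q.1
  iseqv := ⟨fun _ => ⟨rfl, fun _ => Iff.rfl⟩,
            fun h => ⟨h.1.symm, fun i => (h.2 i).symm⟩,
            fun h1 h2 => ⟨h1.1.trans h2.1, fun i => (h1.2 i).trans (h2.2 i)⟩⟩

/-- The number of `τ`-equivalence classes of Dyck paths of semilength `n`. -/
noncomputable def numDyckClasses (τ : List Bool) (n : ℕ) : ℕ :=
  Nat.card (Quotient (dyckSetoid τ n))



namespace UDAux

open List

/-- "No two adjacent falses" relation. -/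
def R (a b : Bool) : Prop := a = true ∨ b = true

/-- Canonical words: no two adjacent falses. -/
def Good (l : List Bool) : Prop := l.Chain' R

lemma occ_iff (p : List Bool) (i : ℕ) :
    OccursAt [true, false] p i ↔ p[i]? = some true ∧ p[i + 1]? = some false := by
  have h0 : p[i]? = (p.drop i)[0]? := by simpa using (List.getElem?_drop p i 0).symm
  have h1 : p[i + 1]? = (p.drop i)[1]? := by simpa using (List.getElem?_drop p i 1).symm
  rw [show OccursAt [true, false] p i ↔ (p.drop i).take 2 = [true, false] from Iff.rfl,
    h0, h1]
  rcases p.drop i with _ | ⟨a, _ | ⟨b, t⟩⟩ <;> simp [List.take]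

lemma not_adj {p : List Bool} {i : ℕ} (h1 : OccursAt [true, false] p i)
    (h2 : OccursAt [true, false] p (i + 1)) : False := by
  rw [occ_iff] at h1 h2
  have := h1.2.symm.trans h2.1
  simp at this

/-- Occurrence characterization for canonical paths. -/
lemma canon_occ {l : List Bool} (hl : Good l) (i : ℕ) :
    OccursAt [true, false] (true :: l) i ↔ (true :: l)[i + 1]? = some false := by
  constructor
  · exact fun h => ((occ_iff _ _).1 h).2
  · intro h
    refine (occ_iff _ _).2 ⟨?_, h⟩
    have hch : Chain' R (true :: l) := by
      show List.IsChain R (true :: l)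
      rw [List.isChain_cons]
      exact ⟨fun y _ => Or.inl rfl, hl⟩
    have hlen : i + 1 < (true :: l).length := by
      by_contra hcon
      rw [List.getElem?_eq_none (by omega)] at h
      simp at h
    have hval : (true :: l)[i + 1] = false := by
      have := h
      rw [List.getElem?_eq_getElem hlen] at this
      exact Option.some_injective _ this
    rw [List.getElem?_eq_getElem (by omega : i < (true :: l).length)]
    rcases i with _ | j
    · simp
    · have hR := (List.isChain_iff_getElem.1 hch) (j + 1) (by simp at hlen ⊢; omega)
      rcases hR with hR | hR
      · simpa using hR
      · rw [hval] at hR; simp at hR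

/-- credit lemma: a Good word stays above -1. -/
lemma credit : ∀ l : List Bool, Good l → ∀ k : ℕ,
    (l.take k).count false ≤ (l.take k).count true + 1
  | [], _, k => by simp
  | true :: t, h, k => by
      have ht : Good t := (List.isChain_cons.1 h).2
      cases k with
      | zero => simp
      | succ k =>
        have := credit t ht k
        simp [List.take_succ_cons, List.count_cons]
        omega
  | [false], _, k => by
      cases k with
      | zero => simp
      | succ k => simp [List.count_cons]
  | false :: false :: t, h, k => by
      exfalso
      have := (List.isChain_cons.1 h).1 false (by simp)
      simp [R] at this
  | false :: true :: t, h, k => by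
      have ht : Good t := (List.isChain_cons.1 ((List.isChain_cons.1 h).2)).2
      match k with
      | 0 => simp
      | 1 => simp [List.count_cons]
      | (j + 2) =>
        have := credit t ht j
        simp [List.take_succ_cons, List.count_cons]
        omega

lemma ballot_cons {l : List Bool} (hl : Good l) : IsBallot (true :: l) := by
  intro k
  cases k with
  | zero => simp
  | succ k =>
    have := credit l hl k
    simp [List.take_succ_cons, List.count_cons]
    omega

abbrev Canon (m : ℕ) := {l : List Bool // l.length = m ∧ Good l}

instance (m : ℕ) : Finite (Canon m) := by
  apply Finite.of_injective (fun x : Canon m => (fun i : Fin m => x.1[(i : ℕ)]?))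
  intro a b h
  apply Subtype.ext
  apply List.ext_getElem?
  intro i
  by_cases hi : i < m
  · exact congrFun h ⟨i, hi⟩
  · rw [List.getElem?_eq_none (by rw [a.2.1]; omega),
      List.getElem?_eq_none (by rw [b.2.1]; omega)]

lemma card_canon_zero : Nat.card (Canon 0) = 1 := by
  have : Unique (Canon 0) :=
    { default := ⟨[], rfl, List.isChain_nil⟩
      uniq := by
        rintro ⟨l, hl, _⟩
        apply Subtype.ext
        simpa using List.length_eq_zero_iff.1 hl }
  exact Nat.card_unique

lemma card_canon_one : Nat.card (Canon 1) = 2 := by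
  have e : Canon 1 ≃ Bool :=
    { toFun := fun x => x.1.headI
      invFun := fun b => ⟨[b], rfl, List.isChain_singleton b⟩
      left_inv := by
        rintro ⟨l, hl, hc⟩
        obtain ⟨a, rfl⟩ := List.length_eq_one_iff.1 hl
        rfl
      right_inv := fun b => rfl }
  rw [Nat.card_congr e]
  simp [Nat.card_eq_fintype_card]

def canonStep (m : ℕ) : Canon (m + 1) ⊕ Canon m → Canon (m + 2)
  | Sum.inl ⟨l, hl, hc⟩ => ⟨true :: l, by simp [hl],
      List.isChain_cons.2 ⟨fun y _ => Or.inl rfl, hc⟩⟩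
  | Sum.inr ⟨l, hl, hc⟩ => ⟨false :: true :: l, by simp [hl],
      List.isChain_cons.2 ⟨fun y hy => by simp at hy; subst hy; exact Or.inr rfl,
        List.isChain_cons.2 ⟨fun y _ => Or.inl rfl, hc⟩⟩⟩

lemma canonStep_bij (m : ℕ) : Function.Bijective (canonStep m) := by
  constructor
  · rintro (⟨a, ha, hca⟩ | ⟨a, ha, hca⟩) (⟨b, hb, hcb⟩ | ⟨b, hb, hcb⟩) h <;>
      simp only [canonStep, Subtype.mk.injEq, List.cons.injEq] at h <;> simp_all
  · rintro ⟨l, hl, hc⟩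
    rcases l with _ | ⟨a, l⟩
    · simp at hl
    rcases a with _ | _
    · -- a = false
      rcases l with _ | ⟨b, t⟩
      · simp at hl
      have hb : b = true := by
        have hrel := (List.isChain_cons.1 hc).1 b (by simp)
        rcases hrel with h | h
        · simp at h
        · exact h
      subst hb
      refine ⟨Sum.inr ⟨t, by simpa using hl, (List.isChain_cons.1 ((List.isChain_cons.1 hc).2)).2⟩, ?_⟩
      rfl
    · -- a = true
      refine ⟨Sum.inl ⟨l, by simpa using hl, (List.isChain_cons.1 hc).2⟩, ?_⟩
      rfl

lemma card_canon : ∀ m, Nat.card (Canon m) = Nat.fib (m + 2) := by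
  intro m
  induction m using Nat.twoStepInduction with
  | zero => simpa using card_canon_zero
  | one => simpa [show Nat.fib 3 = 2 from rfl] using card_canon_one
  | more m ih1 ih2 =>
    have e := Nat.card_congr (Equiv.ofBijective _ (canonStep_bij m)).symm
    rw [e, Nat.card_sum, ih1, ih2, Nat.fib_add_two (n := m + 2),
      show m + 2 + 1 = m + 1 + 2 from by omega]
    omega

end UDAux


/-- the number of UD-equivalence classes of ballot paths of length
`n ≥ 1` is the `(n+1)`-st Fibonacci number. -/
theorem ud_classes_ballot (n : ℕ) (hn : 1 ≤ n) :
    numBallotClasses [true, false] n = Nat.fib (n + 1) := by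
  classical
  let F : UDAux.Canon (n - 1) → Quotient (ballotSetoid [true, false] n) :=
    fun l => Quotient.mk _ ⟨true :: l.1, UDAux.ballot_cons l.2.2, by
      simp [l.2.1]; omega⟩
  have hbij : Function.Bijective F := by
    constructor
    · rintro ⟨a, ha, hca⟩ ⟨b, hb, hcb⟩ h
      obtain ⟨hlen, hocc⟩ := Quotient.exact h
      apply Subtype.ext
      apply List.ext_getElem?
      intro i
      have key : ∀ (c : List Bool) (hc : UDAux.Good c) (hic : i < c.length),
          (c.get ⟨i, hic⟩ = false ↔ OccursAt [true, false] (true :: c) i) := by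
        intro c hc hic
        rw [UDAux.canon_occ hc i, List.getElem?_cons_succ, List.getElem?_eq_getElem hic]
        simp
      by_cases hi : i < n - 1
      · have hia : i < a.length := by omega
        have hib : i < b.length := by omega
        have hiff := ((key a hca hia).trans ((hocc i).trans (key b hcb hib).symm))
        have ha' : a[i]? = some (a.get ⟨i, hia⟩) := by
          simp [List.getElem?_eq_getElem hia]
        have hb' : b[i]? = some (b.get ⟨i, hib⟩) := by
          simp [List.getElem?_eq_getElem hib]
        rw [ha', hb']
        clear key hocc h ha' hb'
        cases h1 : a.get ⟨i, hia⟩ <;> cases h2 : b.get ⟨i, hib⟩ <;> simp_all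
      · rw [List.getElem?_eq_none (show a.length ≤ i by omega),
          List.getElem?_eq_none (show b.length ≤ i by omega)]
    · intro x
      obtain ⟨⟨q, hqb, hqlen⟩, rfl⟩ := Quotient.exists_rep x
      set l₀ : List Bool :=
        List.ofFn (fun j : Fin (n - 1) => !(decide ((q.drop (j : ℕ)).take 2 = [true, false])))
        with hl₀def
      have hlen₀ : l₀.length = n - 1 := List.length_ofFn
      have hget : ∀ i (h : i < n - 1),
          l₀[i]'(by rw [hlen₀]; exact h) = !(decide ((q.drop i).take 2 = [true, false])) := by
        intro i h
        simp [hl₀def]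
      have occ_dec : ∀ i, (decide ((q.drop i).take 2 = [true, false]) = true)
          ↔ OccursAt [true, false] q i := by
        intro i; rw [decide_eq_true_iff]; exact Iff.rfl
      have hocc_bound : ∀ i, OccursAt [true, false] q i → i < n - 1 := by
        intro i hi
        have h2 := ((UDAux.occ_iff q i).1 hi).2
        have h3 : i + 1 < q.length := by
          by_contra hcon
          rw [List.getElem?_eq_none (by omega)] at h2
          simp at h2
        omega
      have hgood : UDAux.Good l₀ := by
        rw [UDAux.Good]; show List.IsChain UDAux.R l₀; rw [List.isChain_iff_getElem]
        intro i hilen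
        rw [hlen₀] at hilen
        rw [hget i (by omega), hget (i + 1) (by omega)]
        have hna : ¬ OccursAt [true, false] q i ∨ ¬ OccursAt [true, false] q (i + 1) := by
          by_contra hcon
          push_neg at hcon
          exact UDAux.not_adj hcon.1 hcon.2
        rcases hna with h | h
        · exact Or.inl (by simp only [Bool.not_eq_true', decide_eq_false_iff_not]; exact h)
        · exact Or.inr (by simp only [Bool.not_eq_true', decide_eq_false_iff_not]; exact h)
      refine ⟨⟨l₀, hlen₀, hgood⟩, ?_⟩
      apply Quotient.sound
      show PathEquiv [true, false] (true :: l₀) q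
      constructor
      · simp only [List.length_cons, hlen₀]
        omega
      · intro i
        rw [UDAux.canon_occ hgood i, List.getElem?_cons_succ]
        by_cases hi : i < n - 1
        · rw [List.getElem?_eq_getElem (by rw [hlen₀]; exact hi), hget i hi]
          simp only [Option.some.injEq, Bool.not_eq_false']
          exact occ_dec i
        · rw [List.getElem?_eq_none (by rw [hlen₀]; omega)]
          constructor
          · intro h; simp at h
          · intro h; exact absurd (hocc_bound i h) hi
  have hcard : Nat.card (Quotient (ballotSetoid [true, false] n))
      = Nat.card (UDAux.Canon (n - 1)) :=
    (Nat.card_congr (Equiv.ofBijective F hbij)).symm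
  rw [numBallotClasses, hcard, UDAux.card_canon]
  congr 1
  omega
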